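/- Let ι be a finite nonempty type, H a countable type, and π a probability mass function on ι × H with marginal π_M(m) = Σ_h π(m,h) > 0 for every m and conditionals π(h|m) = π(m,h)/π_M(m). For each m ∈ ι let 𝒬_m be a nonempty set of pmfs on H. Then the infimum, over all pmfs Q_M on ι and all choices Q_{H|m} ∈ 𝒬_m (m ∈ ι), of KL(Q_M ⊗ Q_{H|·}‖π) (where (Q_M ⊗ Q_{H|·})(m,h) = Q_M(m)·Q_{H|m}(h)) equals the infimum over pmfs Q_M of [KL(Q_M‖π_M) + Σ_{m∈ι} Q_M(m)·inf_{Q_{H|m} ∈ 𝒬_m} KL(Q_{H|m}‖π(·|m))], as an identity in [0,∞]. Moreover, if for each m the infimum inf_{Q ∈ 𝒬_m} KL(Q‖π(·|m)) is attained at some Q^{VB}_{H|m} with finite value, then the weights ᾱ^{VB}_m ∝ π_M(m)·exp(−KL(Q^{VB}_{H|m}‖π(·|m))) together with the distributions Q^{VB}_{H|m} attain the overall infimum. -/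

import Mathlib

open scoped ENNReal Classical

/-- Kullback–Leibler divergence between two probability mass functions on a countable
type: `KL(p‖q) = ∑ x, p x * log (p x / q x) ∈ [0,∞]`, with the conventions
`0 * log (0 / q x) = 0` (automatic since the factor `p x` vanishes) and
`KL(p‖q) = ∞` when `p` is not absolutely continuous with respect to `q`
(or when the series fails to be summable, in which case the sum is genuinely `+∞`
since the negative parts of a relative-entropy series are always summable). -/
noncomputable def klDiv {X : Type*} (p q : PMF X) : ℝ≥0∞ :=
  if (∀ x, q x = 0 → p x = 0) ∧
      Summable (fun x => (p x).toReal * Real.log ((p x).toReal / (q x).toReal))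
  then ENNReal.ofReal (∑' x, (p x).toReal * Real.log ((p x).toReal / (q x).toReal))
  else ⊤

/-- The joint pmf on `ι × H` obtained from a pmf `QM` on `ι` and a family of conditionals
`QH m` on `H`; its value at `(m, h)` is `QM m * QH m h`. -/
noncomputable def jointPMF {ι H : Type*} (QM : PMF ι) (QH : ι → PMF H) : PMF (ι × H) :=
  QM.bind fun m => (QH m).map fun h => (m, h)

/-- The summand appearing in `klDiv`. -/
noncomputable def klTerm {X : Type*} (p q : PMF X) (x : X) : ℝ :=
  (p x).toReal * Real.log ((p x).toReal / (q x).toReal)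

lemma klDiv_eq' {X : Type*} (p q : PMF X) :
    klDiv p q = if (∀ x, q x = 0 → p x = 0) ∧ Summable (klTerm p q)
      then ENNReal.ofReal (∑' x, klTerm p q x) else ⊤ := rfl

lemma klDiv_of_pos {X : Type*} {p q : PMF X}
    (h : (∀ x, q x = 0 → p x = 0) ∧ Summable (klTerm p q)) :
    klDiv p q = ENNReal.ofReal (∑' x, klTerm p q x) := by
  rw [klDiv_eq', if_pos h]

lemma klDiv_of_neg {X : Type*} {p q : PMF X}
    (h : ¬((∀ x, q x = 0 → p x = 0) ∧ Summable (klTerm p q))) :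
    klDiv p q = ⊤ := by
  rw [klDiv_eq', if_neg h]

lemma klDiv_ne_top_iff {X : Type*} {p q : PMF X} :
    klDiv p q ≠ ⊤ ↔ ((∀ x, q x = 0 → p x = 0) ∧ Summable (klTerm p q)) := by
  constructor
  · intro h
    by_contra hc
    exact h (klDiv_of_neg hc)
  · intro h
    rw [klDiv_of_pos h]
    exact ENNReal.ofReal_ne_top

lemma pmf_summable_toReal {X : Type*} (p : PMF X) : Summable fun x => (p x).toReal :=
  ENNReal.summable_toReal (by rw [p.tsum_coe]; exact ENNReal.one_ne_top)

lemma pmf_tsum_toReal {X : Type*} (p : PMF X) : ∑' x, (p x).toReal = 1 := by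
  rw [← ENNReal.tsum_toReal_eq (fun a => p.apply_ne_top a), p.tsum_coe, ENNReal.toReal_one]

lemma pmf_hasSum_toReal {X : Type*} (p : PMF X) : HasSum (fun x => (p x).toReal) 1 := by
  have := (pmf_summable_toReal p).hasSum
  rwa [pmf_tsum_toReal] at this

lemma klReal_nonneg {X : Type*} (p q : PMF X) (hac : ∀ x, q x = 0 → p x = 0)
    (hs : Summable (klTerm p q)) : 0 ≤ ∑' x, klTerm p q x := by
  have key : ∀ x, (p x).toReal - (q x).toReal ≤ klTerm p q x := by
    intro x
    by_cases hp : p x = 0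
    · rw [klTerm, hp]
      simp only [ENNReal.toReal_zero, zero_mul, zero_sub]
      have := ENNReal.toReal_nonneg (a := q x)
      linarith
    · have hq : q x ≠ 0 := fun h => hp (hac x h)
      have hA : 0 < (p x).toReal := ENNReal.toReal_pos hp (p.apply_ne_top x)
      have hB : 0 < (q x).toReal := ENNReal.toReal_pos hq (q.apply_ne_top x)
      rw [klTerm]
      set A := (p x).toReal
      set B := (q x).toReal
      have hlog : Real.log (B / A) ≤ B / A - 1 :=
        Real.log_le_sub_one_of_pos (div_pos hB hA)
      have hinv : Real.log (A / B) = -Real.log (B / A) := by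
        rw [← Real.log_inv, inv_div]
      rw [hinv]
      have h2 := mul_le_mul_of_nonneg_left hlog hA.le
      have h3 : A * (B / A) = B := by field_simp
      nlinarith
  have hsub : Summable fun x => (p x).toReal - (q x).toReal :=
    (pmf_summable_toReal p).sub (pmf_summable_toReal q)
  have h0 : ∑' x, ((p x).toReal - (q x).toReal) = 0 := by
    rw [Summable.tsum_sub (pmf_summable_toReal p) (pmf_summable_toReal q),
      pmf_tsum_toReal, pmf_tsum_toReal, sub_self]
  calc (0 : ℝ) = ∑' x, ((p x).toReal - (q x).toReal) := h0.symm
    _ ≤ _ := Summable.tsum_le_tsum key hsub hs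

lemma gibbs_opt {ι : Type*} [Fintype ι] [Nonempty ι] (q r : ι → ℝ)
    (hq0 : ∀ m, 0 ≤ q m) (hq1 : ∑ m, q m = 1) (hr : ∀ m, 0 < r m) :
    ∑ m, (r m / ∑ j, r j) * Real.log ((r m / ∑ j, r j) / r m)
      ≤ ∑ m, q m * Real.log (q m / r m) := by
  set Z := ∑ j, r j with hZdef
  have hZ : 0 < Z := Finset.sum_pos (fun m _ => hr m) Finset.univ_nonempty
  have hsumr : ∑ m, r m / Z = 1 := by
    rw [← Finset.sum_div, ← hZdef, div_self hZ.ne']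
  have hL : ∑ m, (r m / Z) * Real.log ((r m / Z) / r m) = -Real.log Z := by
    have heq : ∀ m ∈ Finset.univ, (r m / Z) * Real.log ((r m / Z) / r m)
        = (r m / Z) * (-Real.log Z) := by
      intro m _
      have h1 : (r m / Z) / r m = Z⁻¹ := by
        rw [div_right_comm, div_self (hr m).ne', one_div]
      rw [h1, Real.log_inv]
    rw [Finset.sum_congr rfl heq, ← Finset.sum_mul, hsumr, one_mul]
  have key : ∀ m, q m - r m / Z ≤ q m * Real.log (q m / r m) + q m * Real.log Z := by
    intro m
    rcases eq_or_lt_of_le (hq0 m) with h0 | hqm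
    · rw [← h0]
      simp only [zero_mul, zero_sub, add_zero, zero_add]
      have : 0 ≤ r m / Z := (div_pos (hr m) hZ).le
      linarith
    · have hrm := hr m
      have h1 : q m * Real.log (q m / r m) + q m * Real.log Z
          = q m * Real.log (q m / (r m / Z)) := by
        rw [← mul_add, ← Real.log_mul (div_pos hqm hrm).ne' hZ.ne']
        congr 2
        field_simp
      rw [h1]
      have hlog : Real.log ((r m / Z) / q m) ≤ (r m / Z) / q m - 1 :=
        Real.log_le_sub_one_of_pos (div_pos (div_pos hrm hZ) hqm)
      have hinv : Real.log (q m / (r m / Z)) = -Real.log ((r m / Z) / q m) := by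
        rw [← Real.log_inv, inv_div]
      rw [hinv]
      have h2 := mul_le_mul_of_nonneg_left hlog hqm.le
      have h3 : q m * ((r m / Z) / q m) = r m / Z := by
        field_simp
      nlinarith
  have hsumkey : ∑ m, (q m - r m / Z) ≤ ∑ m, (q m * Real.log (q m / r m) + q m * Real.log Z) :=
    Finset.sum_le_sum (fun m _ => key m)
  rw [Finset.sum_sub_distrib, Finset.sum_add_distrib, hq1, hsumr, ← Finset.sum_mul, hq1,
    one_mul, sub_self] at hsumkey
  rw [hL]
  linarith

lemma jointPMF_apply {ι H : Type*} (QM : PMF ι) (QH : ι → PMF H) (m : ι) (h : H) :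
    jointPMF QM QH (m, h) = QM m * QH m h := by
  rw [jointPMF, PMF.bind_apply]
  rw [tsum_eq_single m ?_]
  · rw [PMF.map_apply]
    congr 1
    rw [tsum_eq_single h ?_]
    · rw [if_pos rfl]
    · intro h' hne
      rw [if_neg]
      rintro ⟨rfl, rfl⟩
      exact hne rfl
  · intro m' hne
    rw [PMF.map_apply]
    convert mul_zero (QM m')
    rw [ENNReal.tsum_eq_zero]
    intro h'
    rw [if_neg]
    rintro ⟨rfl, rfl⟩
    exact hne rfl

/-- Chain rule for `klDiv` over a product decomposition. -/
lemma klDiv_joint {ι H : Type*} [Fintype ι] (QM : PMF ι) (QH : ι → PMF H)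
    (π : PMF (ι × H)) (πM : PMF ι) (cond : ι → PMF H)
    (hprod : ∀ m h, π (m, h) = πM m * cond m h)
    (hpos : ∀ m, πM m ≠ 0) :
    klDiv (jointPMF QM QH) π
      = klDiv QM πM + ∑ m, QM m * klDiv (QH m) (cond m) := by
  classical
  -- pointwise decomposition of the joint term, given fibrewise absolute continuity
  have pointA : ∀ m, (∀ h, cond m h = 0 → QH m h = 0) → ∀ h,
      klTerm (jointPMF QM QH) π (m, h)
        = klTerm QM πM m * (QH m h).toReal
          + (QM m).toReal * klTerm (QH m) (cond m) h := by
    intro m hac h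
    rw [klTerm, klTerm, klTerm, jointPMF_apply, hprod, ENNReal.toReal_mul, ENNReal.toReal_mul]
    by_cases hbz : QH m h = 0
    · rw [hbz]; simp
    by_cases haz : QM m = 0
    · rw [haz]; simp
    have hA : 0 < (QM m).toReal := ENNReal.toReal_pos haz (QM.apply_ne_top m)
    have hB : 0 < (QH m h).toReal := ENNReal.toReal_pos hbz ((QH m).apply_ne_top h)
    have hdz : cond m h ≠ 0 := fun hz => hbz (hac h hz)
    have hC : 0 < (πM m).toReal := ENNReal.toReal_pos (hpos m) (πM.apply_ne_top m)
    have hD : 0 < (cond m h).toReal := ENNReal.toReal_pos hdz ((cond m).apply_ne_top h)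
    rw [show (QM m).toReal * (QH m h).toReal / ((πM m).toReal * (cond m h).toReal)
        = ((QM m).toReal / (πM m).toReal) * ((QH m h).toReal / (cond m h).toReal) from
      (div_mul_div_comm _ _ _ _).symm]
    rw [Real.log_mul (div_pos hA hC).ne' (div_pos hB hD).ne']
    ring
  by_cases hfin : ∀ m, QM m ≠ 0 → klDiv (QH m) (cond m) ≠ ⊤
  · -- finite case
    have hsupp : ∀ m, QM m ≠ 0 →
        (∀ h, cond m h = 0 → QH m h = 0) ∧ Summable (klTerm (QH m) (cond m)) :=
      fun m hm => klDiv_ne_top_iff.mp (hfin m hm)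
    have hKval : ∀ m, QM m ≠ 0 → (klDiv (QH m) (cond m)).toReal
        = ∑' h, klTerm (QH m) (cond m) h := by
      intro m hm
      rw [klDiv_of_pos (hsupp m hm),
        ENNReal.toReal_ofReal (klReal_nonneg _ _ (hsupp m hm).1 (hsupp m hm).2)]
    -- fibrewise sums
    have fiber : ∀ m, HasSum (fun h => klTerm (jointPMF QM QH) π (m, h))
        (klTerm QM πM m + (QM m).toReal * (klDiv (QH m) (cond m)).toReal) := by
      intro m
      by_cases haz : QM m = 0
      · have hz : ∀ h, klTerm (jointPMF QM QH) π (m, h) = 0 := by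
          intro h
          rw [klTerm, jointPMF_apply, haz, zero_mul]
          simp
        have hv : klTerm QM πM m + (QM m).toReal * (klDiv (QH m) (cond m)).toReal = 0 := by
          rw [klTerm, haz]
          simp
        rw [hv, funext hz]
        exact hasSum_zero
      · obtain ⟨hac, hsum⟩ := hsupp m haz
        have heq : (fun h => klTerm (jointPMF QM QH) π (m, h))
            = fun h => klTerm QM πM m * (QH m h).toReal
              + (QM m).toReal * klTerm (QH m) (cond m) h := funext (pointA m hac)
        rw [heq, hKval m haz]
        have h1 := (pmf_hasSum_toReal (QH m)).mul_left (klTerm QM πM m)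
        have h2 := hsum.hasSum.mul_left ((QM m).toReal)
        have := h1.add h2
        rwa [mul_one] at this
    -- global sum via masked fibers
    have hFsum : ∀ m : ι, HasSum (fun p : ι × H => if p.1 = m then klTerm (jointPMF QM QH) π p else 0)
        (klTerm QM πM m + (QM m).toReal * (klDiv (QH m) (cond m)).toReal) := by
      intro m
      have hinj : Function.Injective (fun h : H => (m, h)) := fun _ _ e => (Prod.ext_iff.mp e).2
      refine (Function.Injective.hasSum_iff hinj ?_).mp ?_
      · intro p hp
        rw [if_neg]
        intro hpm
        exact hp ⟨p.2, Prod.ext hpm.symm rfl⟩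
      · have : ((fun p : ι × H => if p.1 = m then klTerm (jointPMF QM QH) π p else 0)
            ∘ fun h : H => (m, h)) = fun h => klTerm (jointPMF QM QH) π (m, h) := by
          funext h
          exact if_pos rfl
        rw [this]
        exact fiber m
    have ht_split : (klTerm (jointPMF QM QH) π)
        = fun p => ∑ m, if p.1 = m then klTerm (jointPMF QM QH) π p else 0 := by
      funext p
      rw [Finset.sum_ite_eq Finset.univ p.1 (fun _ => klTerm (jointPMF QM QH) π p),
        if_pos (Finset.mem_univ _)]
    have hall : HasSum (klTerm (jointPMF QM QH) π)
        (∑ m, (klTerm QM πM m + (QM m).toReal * (klDiv (QH m) (cond m)).toReal)) := by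
      rw [ht_split]
      exact hasSum_sum fun m _ => hFsum m
    have hACjoint : ∀ p : ι × H, π p = 0 → jointPMF QM QH p = 0 := by
      rintro ⟨m, h⟩ hp
      rw [hprod] at hp
      rw [jointPMF_apply]
      rcases mul_eq_zero.mp hp with h1 | h2
      · exact absurd h1 (hpos m)
      · by_cases haz : QM m = 0
        · rw [haz, zero_mul]
        · rw [(hsupp m haz).1 h h2, mul_zero]
    rw [klDiv_of_pos ⟨hACjoint, hall.summable⟩, hall.tsum_eq]
    -- now compute the right-hand side
    have hQMkl : klDiv QM πM = ENNReal.ofReal (∑ m, klTerm QM πM m) := by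
      rw [klDiv_of_pos ⟨fun m h0 => absurd h0 (hpos m), Summable.of_finite⟩, tsum_fintype]
    have hsum2 : ∑ m, QM m * klDiv (QH m) (cond m)
        = ENNReal.ofReal (∑ m, (QM m).toReal * (klDiv (QH m) (cond m)).toReal) := by
      rw [ENNReal.ofReal_sum_of_nonneg
        (fun m _ => mul_nonneg ENNReal.toReal_nonneg ENNReal.toReal_nonneg)]
      refine Finset.sum_congr rfl fun m _ => ?_
      by_cases haz : QM m = 0
      · rw [haz]
        simp
      · rw [ENNReal.ofReal_mul ENNReal.toReal_nonneg, ENNReal.ofReal_toReal (QM.apply_ne_top m),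
          ENNReal.ofReal_toReal (hfin m haz)]
    rw [hQMkl, hsum2, ← ENNReal.ofReal_add ?h1 ?h2, Finset.sum_add_distrib]
    case h1 =>
      have := klReal_nonneg QM πM (fun m h0 => absurd h0 (hpos m)) Summable.of_finite
      rwa [tsum_fintype] at this
    case h2 =>
      exact Finset.sum_nonneg fun m _ => mul_nonneg ENNReal.toReal_nonneg ENNReal.toReal_nonneg
  · -- infinite case
    push_neg at hfin
    obtain ⟨m₀, hm₀, htop⟩ := hfin
    have hRHS : ∑ m, QM m * klDiv (QH m) (cond m) = ⊤ := by
      rw [ENNReal.sum_eq_top]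
      exact ⟨m₀, Finset.mem_univ _, by rw [htop, ENNReal.mul_top hm₀]⟩
    rw [hRHS, add_top]
    have hneg : ¬((∀ h, cond m₀ h = 0 → QH m₀ h = 0) ∧ Summable (klTerm (QH m₀) (cond m₀))) :=
      fun hc => (klDiv_ne_top_iff.mpr hc) htop
    by_cases hac0 : ∀ h, cond m₀ h = 0 → QH m₀ h = 0
    · have hsum0 : ¬Summable (klTerm (QH m₀) (cond m₀)) := fun hs => hneg ⟨hac0, hs⟩
      apply klDiv_of_neg
      rintro ⟨hacj, hsj⟩
      apply hsum0
      have hinj : Function.Injective (fun h : H => (m₀, h)) := fun _ _ e => (Prod.ext_iff.mp e).2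
      have hfib : Summable (fun h => klTerm (jointPMF QM QH) π (m₀, h)) :=
        hsj.comp_injective hinj
      have heq : (fun h => klTerm (jointPMF QM QH) π (m₀, h))
          = fun h => klTerm QM πM m₀ * (QH m₀ h).toReal
            + (QM m₀).toReal * klTerm (QH m₀) (cond m₀) h := funext (pointA m₀ hac0)
      rw [heq] at hfib
      have h2 : Summable (fun h => (QM m₀).toReal * klTerm (QH m₀) (cond m₀) h) := by
        have := hfib.sub ((pmf_summable_toReal (QH m₀)).mul_left (klTerm QM πM m₀))
        simpa using this
      have ha0 : (QM m₀).toReal ≠ 0 := ENNReal.toReal_ne_zero.mpr ⟨hm₀, QM.apply_ne_top m₀⟩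
      have h3 := h2.mul_left ((QM m₀).toReal)⁻¹
      simpa [← mul_assoc, inv_mul_cancel₀ ha0] using h3
    · push_neg at hac0
      obtain ⟨h0, hc0, hq0⟩ := hac0
      apply klDiv_of_neg
      rintro ⟨hacj, -⟩
      have hz : jointPMF QM QH (m₀, h0) = 0 := hacj (m₀, h0) (by rw [hprod, hc0, mul_zero])
      rw [jointPMF_apply] at hz
      exact (mul_ne_zero hm₀ hq0) hz

/-- **Two-step optimisation decomposition and Corollary 1 of the paper (optimal
variational weights `ᾱ^{VB}`), discrete version.** Let `π` be a pmf on `ι × H` with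
positive marginal `πM` and conditionals `cond m`, and for each `m` let `𝒬 m` be a
nonempty set of pmfs on `H`. Then the infimum, over all pmfs `QM` on `ι` and all choices
`QH m ∈ 𝒬 m`, of `KL(QM ⊗ QH‖π)` (where `(QM ⊗ QH) (m, h) = QM m * QH m h`) equals
`⨅ QM, [KL(QM‖πM) + ∑ m, QM m * ⨅ Q ∈ 𝒬 m, KL(Q‖cond m)]`, as an identity in `[0,∞]`.
Moreover, if for each `m` the inner infimum is attained at some `QVB m ∈ 𝒬 m` with
finite value, then the weights
`αVB m ∝ πM m * exp (- KL(QVB m‖cond m))` together with the family `QVB` attain the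
overall infimum. -/
theorem variational_two_step_optimisation {ι H : Type*} [Fintype ι] [Nonempty ι]
    [Countable H]
    (π : PMF (ι × H))
    (πM : PMF ι) (hπM : ∀ m, πM m = ∑' h, π (m, h))
    (hπM_pos : ∀ m, 0 < πM m)
    (cond : ι → PMF H) (hcond : ∀ m h, cond m h = π (m, h) / πM m)
    (𝒬 : ι → Set (PMF H)) (h𝒬 : ∀ m, (𝒬 m).Nonempty)
    (QVB : ι → PMF H) (hQVB_mem : ∀ m, QVB m ∈ 𝒬 m)
    (hQVB_att : ∀ m, klDiv (QVB m) (cond m) = ⨅ Q ∈ 𝒬 m, klDiv Q (cond m))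
    (hQVB_fin : ∀ m, klDiv (QVB m) (cond m) < ⊤)
    (αVB : PMF ι)
    (hαVB : ∀ m, αVB m = ENNReal.ofReal
      ((πM m).toReal * Real.exp (- (klDiv (QVB m) (cond m)).toReal) /
        ∑ j, (πM j).toReal * Real.exp (- (klDiv (QVB j) (cond j)).toReal))) :
    ((⨅ (QM : PMF ι) (QH : (m : ι) → 𝒬 m),
        klDiv (jointPMF QM fun m => (QH m : PMF H)) π) =
      ⨅ QM : PMF ι,
        (klDiv QM πM + ∑ m, QM m * ⨅ Q ∈ 𝒬 m, klDiv Q (cond m))) ∧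
    klDiv (jointPMF αVB QVB) π =
      ⨅ (QM : PMF ι) (QH : (m : ι) → 𝒬 m),
        klDiv (jointPMF QM fun m => (QH m : PMF H)) π := by
  classical
  have hpos' : ∀ m, πM m ≠ 0 := fun m => (hπM_pos m).ne'
  have hprod : ∀ m h, π (m, h) = πM m * cond m h := by
    intro m h
    rw [hcond m h, mul_comm, ENNReal.div_mul_cancel (hpos' m) (πM.apply_ne_top m)]
  -- the inner infimum over admissible conditionals, for each fixed `QM`
  have inner : ∀ QM : PMF ι,
      (⨅ QH : (m : ι) → 𝒬 m, klDiv (jointPMF QM fun m => (QH m : PMF H)) π)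
        = klDiv QM πM + ∑ m, QM m * klDiv (QVB m) (cond m) := by
    intro QM
    apply le_antisymm
    · exact iInf_le_of_le (fun m => ⟨QVB m, hQVB_mem m⟩)
        (le_of_eq (klDiv_joint QM QVB π πM cond hprod hpos'))
    · refine le_iInf fun QH => ?_
      rw [klDiv_joint QM (fun m => (QH m : PMF H)) π πM cond hprod hpos']
      refine add_le_add_right (Finset.sum_le_sum fun m _ => ?_) _
      refine mul_le_mul_right ?_ _
      rw [hQVB_att m]
      exact iInf₂_le (QH m : PMF H) (QH m).2
  -- the common optimisation objective, in closed real form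
  have hq1 : ∀ QM : PMF ι, ∑ m, (QM m).toReal = 1 := by
    intro QM
    rw [← tsum_fintype (L := SummationFilter.unconditional ι)]
    exact pmf_tsum_toReal QM
  have hcpos : ∀ m, 0 < (πM m).toReal :=
    fun m => ENNReal.toReal_pos (hpos' m) (πM.apply_ne_top m)
  have hr : ∀ m, 0 < (πM m).toReal * Real.exp (-(klDiv (QVB m) (cond m)).toReal) :=
    fun m => mul_pos (hcpos m) (Real.exp_pos _)
  have key : ∀ QM : PMF ι, klDiv QM πM + ∑ m, QM m * klDiv (QVB m) (cond m)
      = ENNReal.ofReal (∑ m, (QM m).toReal * Real.log ((QM m).toReal /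
          ((πM m).toReal * Real.exp (-(klDiv (QVB m) (cond m)).toReal)))) := by
    intro QM
    have hACm : ∀ m, πM m = 0 → QM m = 0 := fun m h0 => absurd h0 (hpos' m)
    rw [klDiv_of_pos ⟨hACm, Summable.of_finite⟩, tsum_fintype]
    have hsum2 : ∑ m, QM m * klDiv (QVB m) (cond m)
        = ENNReal.ofReal (∑ m, (QM m).toReal * (klDiv (QVB m) (cond m)).toReal) := by
      rw [ENNReal.ofReal_sum_of_nonneg
        (fun m _ => mul_nonneg ENNReal.toReal_nonneg ENNReal.toReal_nonneg)]
      refine Finset.sum_congr rfl fun m _ => ?_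
      rw [ENNReal.ofReal_mul ENNReal.toReal_nonneg, ENNReal.ofReal_toReal (QM.apply_ne_top m),
        ENNReal.ofReal_toReal (hQVB_fin m).ne]
    rw [hsum2, ← ENNReal.ofReal_add ?h1 ?h2]
    case h1 =>
      have := klReal_nonneg QM πM hACm Summable.of_finite
      rwa [tsum_fintype] at this
    case h2 =>
      exact Finset.sum_nonneg fun m _ => mul_nonneg ENNReal.toReal_nonneg ENNReal.toReal_nonneg
    congr 1
    rw [← Finset.sum_add_distrib]
    refine Finset.sum_congr rfl fun m _ => ?_
    by_cases hqz : QM m = 0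
    · rw [klTerm, hqz]
      simp
    · have hqpos : 0 < (QM m).toReal := ENNReal.toReal_pos hqz (QM.apply_ne_top m)
      have e1 : Real.log ((QM m).toReal /
          ((πM m).toReal * Real.exp (-(klDiv (QVB m) (cond m)).toReal)))
          = Real.log (QM m).toReal - Real.log (πM m).toReal
            + (klDiv (QVB m) (cond m)).toReal := by
        rw [Real.log_div hqpos.ne' (hr m).ne', Real.log_mul (hcpos m).ne' (Real.exp_ne_zero _),
          Real.log_exp]
        ring
      have e2 : Real.log ((QM m).toReal / (πM m).toReal)
          = Real.log (QM m).toReal - Real.log (πM m).toReal :=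
        Real.log_div hqpos.ne' (hcpos m).ne'
      rw [klTerm, e1, e2]
      ring
  -- `αVB` minimises the objective
  have hαtoReal : ∀ m, (αVB m).toReal
      = (πM m).toReal * Real.exp (-(klDiv (QVB m) (cond m)).toReal) /
          ∑ j, (πM j).toReal * Real.exp (-(klDiv (QVB j) (cond j)).toReal) := by
    intro m
    rw [hαVB m, ENNReal.toReal_ofReal]
    refine div_nonneg (hr m).le ?_
    exact Finset.sum_nonneg fun j _ => (hr j).le
  have opt : ∀ QM : PMF ι,
      klDiv αVB πM + ∑ m, αVB m * klDiv (QVB m) (cond m)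
        ≤ klDiv QM πM + ∑ m, QM m * klDiv (QVB m) (cond m) := by
    intro QM
    rw [key αVB, key QM]
    apply ENNReal.ofReal_le_ofReal
    have hgibbs := gibbs_opt (fun m => (QM m).toReal)
      (fun m => (πM m).toReal * Real.exp (-(klDiv (QVB m) (cond m)).toReal))
      (fun m => ENNReal.toReal_nonneg) (hq1 QM) hr
    refine le_trans (le_of_eq ?_) hgibbs
    refine Finset.sum_congr rfl fun m _ => ?_
    rw [hαtoReal m]
  constructor
  · calc (⨅ (QM : PMF ι) (QH : (m : ι) → 𝒬 m),
        klDiv (jointPMF QM fun m => (QH m : PMF H)) π)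
        = ⨅ QM : PMF ι, (klDiv QM πM + ∑ m, QM m * klDiv (QVB m) (cond m)) :=
          iInf_congr inner
      _ = _ := by
          refine iInf_congr fun QM => ?_
          congr 1
          exact Finset.sum_congr rfl fun m _ => by rw [hQVB_att m]
  · rw [iInf_congr inner, klDiv_joint αVB QVB π πM cond hprod hpos']
    apply le_antisymm
    · exact le_iInf fun QM => opt QM
    · exact iInf_le _ αVB
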